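/- Let A be a C*-algebra and {J_λ}_{λ∈Λ} a family of closed two-sided ideals of A. Define N : A → ℝ by N(a) = sup { ‖a·x‖ : λ ∈ Λ, x ∈ J_λ, ‖x‖ ≤ 1 } (with N(a) = 0 if the set is empty). Then N is a C*-seminorm on A bounded by the norm: for all a, b ∈ A and scalars c, one has N(a) ≤ ‖a‖, N(a + b) ≤ N(a) + N(b), N(c·a) = |c|·N(a), N(a·b) ≤ N(a)·N(b), N(a*) = N(a), and N(a*·a) = N(a)². -/

import Mathlib

variable {A : Type*} [NonUnitalNormedRing A] [StarRing A] [CStarRing A]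
  [NormedSpace ℂ A] [IsScalarTower ℂ A A] [SMulCommClass ℂ A A]
  [StarModule ℂ A] [CompleteSpace A]

/-- The seminorm `N(a) = sup { ‖a·x‖ : λ ∈ Λ, x ∈ J_λ, ‖x‖ ≤ 1 }` associated with a
family of ideals `J_λ` of a C*-algebra `A` (equal to `0` if the set is empty, since
`sSup ∅ = 0` in `ℝ`). -/
noncomputable def idealSeminorm {Λ : Type*} (J : Λ → Set A) (a : A) : ℝ :=
  sSup {r : ℝ | ∃ l x, x ∈ J l ∧ ‖x‖ ≤ 1 ∧ r = ‖a * x‖}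

/-- The non-unital C⋆-algebra structure on `A` assembled from the ambient instances. -/
@[reducible] noncomputable def idealSeminormAuxAlg : NonUnitalCStarAlgebra A :=
  { ‹NonUnitalNormedRing A›, ‹StarRing A›, ‹CStarRing A›, ‹NormedSpace ℂ A›,
    ‹IsScalarTower ℂ A A›, ‹SMulCommClass ℂ A A›, ‹StarModule ℂ A›, ‹CompleteSpace A› with }

set_option maxHeartbeats 1000000 in
/-- Approximate-unit style approximation: for any `x` and `δ > 0` there is `u` with
`‖x - x * u‖ ≤ δ`; here `u = cfcₙ (fun t => t² / (δ⁴ + t²)) (star x * x)`. -/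
lemma idealSeminorm_approx (x : A) {δ : ℝ} (hδ : 0 < δ) :
    ∃ u : A, ‖x - x * u‖ ≤ δ := by
  letI := idealSeminormAuxAlg (A := A)
  set ε : ℝ := δ ^ 4 with hε
  have hε0 : 0 < ε := by positivity
  set b : A := star x * x with hb
  have hbsa : IsSelfAdjoint b := IsSelfAdjoint.star_mul_self x
  set g : ℝ → ℝ := fun t => t ^ 2 / (ε + t ^ 2) with hg
  have hden : ∀ t : ℝ, ε + t ^ 2 ≠ 0 := fun t => by positivity
  have hgc : Continuous g := by
    apply Continuous.div (by fun_prop) (by fun_prop) hden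
  have hg0 : g 0 = 0 := by simp [hg]
  set u : A := cfcₙ g b with hu
  have husa : IsSelfAdjoint u := cfcₙ_predicate _ b
  refine ⟨u, ?_⟩
  have key : star (x - x * u) * (x - x * u) = cfcₙ (fun t => t * (1 - g t) ^ 2) b := by
    have h1 : cfcₙ (fun t : ℝ => t * (1 - g t) ^ 2) b
        = cfcₙ (fun t : ℝ => t - (t * g t + (g t * t - g t * (t * g t)))) b := by
      apply cfcₙ_congr; intro t _; ring
    rw [h1, cfcₙ_sub _ _ b (by fun_prop) (by simp [hg0])
        (by fun_prop) (by simp [hg0]),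
      cfcₙ_add _ _ b (by fun_prop) (by simp [hg0]) (by fun_prop) (by simp [hg0]),
      cfcₙ_sub _ _ b (by fun_prop) (by simp [hg0]) (by fun_prop) (by simp [hg0]),
      cfcₙ_mul _ _ b (by fun_prop) (by simp) (by fun_prop) (by simp [hg0]),
      cfcₙ_mul _ _ b (by fun_prop) (by simp [hg0]) (by fun_prop) (by simp),
      cfcₙ_mul _ _ b (by fun_prop) (by simp [hg0]) (by fun_prop) (by simp [hg0]),
      cfcₙ_mul _ _ b (by fun_prop) (by simp) (by fun_prop) (by simp [hg0]),
      cfcₙ_id' ℝ b]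
    simp only [hb, star_sub, star_mul, husa.star_eq, hbsa.star_eq, star_star]
    noncomm_ring
  have hbound : ∀ t ∈ quasispectrum ℝ b, ‖t * (1 - g t) ^ 2‖ ≤ δ ^ 2 := by
    intro t _
    have h2 : 1 - g t = ε / (ε + t ^ 2) := by
      have := hden t
      rw [show g t = t ^ 2 / (ε + t ^ 2) from rfl, eq_div_iff this, sub_mul, div_mul_cancel₀ _ this]
      ring
    rw [h2, Real.norm_eq_abs]
    have hd : 0 < ε + t ^ 2 := by positivity
    have habs : |t * (ε / (ε + t ^ 2)) ^ 2| = |t| * ε ^ 2 / (ε + t ^ 2) ^ 2 := by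
      rw [abs_mul, abs_pow, abs_div, abs_of_pos hε0, abs_of_pos hd, div_pow, mul_div_assoc]
    rw [habs, div_le_iff₀ (by positivity)]
    simp only [hε]
    have h4 : δ ^ 2 * (4 * δ ^ 4 * t ^ 2) ≤ δ ^ 2 * (δ ^ 4 + t ^ 2) ^ 2 := by
      nlinarith [sq_nonneg (δ ^ 4 - t ^ 2), pow_pos hδ 2]
    have h5 : δ ^ 2 * (δ ^ 4) ^ 2 ≤ δ ^ 2 * (δ ^ 4 + t ^ 2) ^ 2 :=
      mul_le_mul_of_nonneg_left
        (by nlinarith [sq_nonneg t, pow_pos hδ 4] : (δ ^ 4) ^ 2 ≤ (δ ^ 4 + t ^ 2) ^ 2)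
        (by positivity)
    rcases le_or_gt |t| (δ ^ 2) with h | h
    · have h6 : δ ^ 8 * |t| ≤ δ ^ 8 * δ ^ 2 :=
        mul_le_mul_of_nonneg_left h (by positivity)
      nlinarith [h5, h6]
    · have h6 : (4 * δ ^ 6 * |t|) * δ ^ 2 ≤ (4 * δ ^ 6 * |t|) * |t| :=
        mul_le_mul_of_nonneg_left h.le (by positivity)
      have h7 : δ ^ 8 * |t| ≤ 4 * (δ ^ 8 * |t|) := by nlinarith [abs_nonneg t, pow_pos hδ 8]
      nlinarith [h4, h6, h7, sq_abs t]
  have hnorm : ‖star (x - x * u) * (x - x * u)‖ ≤ δ ^ 2 := by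
    rw [key]; exact norm_cfcₙ_le hbound
  rw [CStarRing.norm_star_mul_self] at hnorm
  nlinarith [norm_nonneg (x - x * u), hδ.le]

/-- A closed set which absorbs right multiplication is closed under complex scaling. -/
lemma idealSeminorm_smul_mem {J : Set A} (hclosed : IsClosed J)
    (hmul_right : ∀ (a : A), ∀ x ∈ J, x * a ∈ J) {x : A} (hx : x ∈ J) (c : ℂ) :
    c • x ∈ J := by
  have hmem : c • x ∈ closure J := by
    rw [Metric.mem_closure_iff]
    intro ε hε
    have hδ : 0 < ε / (2 * (‖c‖ + 1)) := by positivity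
    obtain ⟨u, hu⟩ := idealSeminorm_approx x hδ
    refine ⟨x * (c • u), hmul_right _ x hx, ?_⟩
    rw [dist_eq_norm]
    have : c • x - x * (c • u) = c • (x - x * u) := by
      rw [mul_smul_comm, smul_sub]
    rw [this, norm_smul]
    calc ‖c‖ * ‖x - x * u‖ ≤ (‖c‖ + 1) * (ε / (2 * (‖c‖ + 1))) := by
          apply mul_le_mul (by linarith [norm_nonneg c]) hu (norm_nonneg _)
            (by positivity)
      _ = ε / 2 := by field_simp
      _ < ε := by linarith
  rwa [hclosed.closure_eq] at hmem

/-- If `{J_λ}` is a family of closed two-sided ideals of a C*-algebra `A`, then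
`N(a) = sup { ‖a·x‖ : λ ∈ Λ, x ∈ J_λ, ‖x‖ ≤ 1 }` is a C*-seminorm bounded by the norm:
`N(a) ≤ ‖a‖`, `N(a + b) ≤ N(a) + N(b)`, `N(c • a) = |c| N(a)`, `N(a b) ≤ N(a) N(b)`,
`N(a*) = N(a)` and `N(a* a) = N(a)²`. -/
theorem idealSeminorm_is_cstar_seminorm {Λ : Type*} (J : Λ → Set A)
    (hclosed : ∀ l, IsClosed (J l))
    (hzero : ∀ l, (0 : A) ∈ J l)
    (hadd : ∀ l, ∀ x ∈ J l, ∀ y ∈ J l, x + y ∈ J l)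
    (hneg : ∀ l, ∀ x ∈ J l, -x ∈ J l)
    (hmul_left : ∀ l (a : A), ∀ x ∈ J l, a * x ∈ J l)
    (hmul_right : ∀ l (a : A), ∀ x ∈ J l, x * a ∈ J l) :
    ∀ (a b : A) (c : ℂ),
      idealSeminorm J a ≤ ‖a‖ ∧
      idealSeminorm J (a + b) ≤ idealSeminorm J a + idealSeminorm J b ∧
      idealSeminorm J (c • a) = ‖c‖ * idealSeminorm J a ∧
      idealSeminorm J (a * b) ≤ idealSeminorm J a * idealSeminorm J b ∧
      idealSeminorm J (star a) = idealSeminorm J a ∧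
      idealSeminorm J (star a * a) = (idealSeminorm J a) ^ 2 := by
  set N := idealSeminorm J with hN
  set S : A → Set ℝ := fun a => {r : ℝ | ∃ l x, x ∈ J l ∧ ‖x‖ ≤ 1 ∧ r = ‖a * x‖} with hS
  have hNS : ∀ a, N a = sSup (S a) := fun a => rfl
  -- basic facts
  have hbdd : ∀ a : A, BddAbove (S a) := by
    rintro a
    refine ⟨‖a‖, ?_⟩
    rintro r ⟨l, x, hx, hx1, rfl⟩
    exact (norm_mul_le a x).trans (by
      calc ‖a‖ * ‖x‖ ≤ ‖a‖ * 1 := mul_le_mul_of_nonneg_left hx1 (norm_nonneg a)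
        _ = ‖a‖ := mul_one _)
  have hnonneg : ∀ a : A, 0 ≤ N a := by
    intro a
    refine Real.sSup_nonneg ?_
    rintro r ⟨l, x, hx, hx1, rfl⟩
    exact norm_nonneg _
  have hle_norm : ∀ a : A, N a ≤ ‖a‖ := by
    intro a
    refine Real.sSup_le ?_ (norm_nonneg a)
    rintro r ⟨l, x, hx, hx1, rfl⟩
    exact (norm_mul_le a x).trans (by
      calc ‖a‖ * ‖x‖ ≤ ‖a‖ * 1 := mul_le_mul_of_nonneg_left hx1 (norm_nonneg a)
        _ = ‖a‖ := mul_one _)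
  have hmem_le : ∀ (a : A) (l : Λ), ∀ x ∈ J l, ‖x‖ ≤ 1 → ‖a * x‖ ≤ N a := by
    intro a l x hx hx1
    exact le_csSup (hbdd a) ⟨l, x, hx, hx1, rfl⟩
  -- the key scaling estimate
  have hkey : ∀ (a : A) (l : Λ), ∀ x ∈ J l, ‖a * x‖ ≤ N a * ‖x‖ := by
    intro a l x hx
    by_cases hx0 : x = 0
    · simp [hx0, hnonneg a]
    · have hxn : (0 : ℝ) < ‖x‖ := norm_pos_iff.mpr hx0
      set c : ℂ := ((‖x‖⁻¹ : ℝ) : ℂ) with hc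
      have hz : c • x ∈ J l :=
        idealSeminorm_smul_mem (hclosed l) (fun a x hx => hmul_right l a x hx) hx c
      have hcn : ‖c‖ = ‖x‖⁻¹ := by
        rw [hc, Complex.norm_real, Real.norm_eq_abs, abs_of_pos (by positivity)]
      have hzn : ‖c • x‖ ≤ 1 := by
        rw [norm_smul, hcn, inv_mul_cancel₀ hxn.ne']
      have h1 : ‖a * (c • x)‖ ≤ N a := hmem_le a l _ hz hzn
      rw [mul_smul_comm, norm_smul, hcn] at h1
      calc ‖a * x‖ = ‖x‖ * (‖x‖⁻¹ * ‖a * x‖) := by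
            field_simp
        _ ≤ ‖x‖ * N a := mul_le_mul_of_nonneg_left h1 hxn.le
        _ = N a * ‖x‖ := mul_comm _ _
  -- subadditivity of smul
  have hsmul_le : ∀ (c : ℂ) (a : A), N (c • a) ≤ ‖c‖ * N a := by
    intro c a
    refine Real.sSup_le ?_ (mul_nonneg (norm_nonneg c) (hnonneg a))
    rintro r ⟨l, x, hx, hx1, rfl⟩
    rw [smul_mul_assoc, norm_smul]
    exact mul_le_mul_of_nonneg_left (hmem_le a l x hx hx1) (norm_nonneg c)
  -- star inequality
  have hstar_le : ∀ a : A, N (star a) ≤ N a := by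
    intro a
    refine Real.sSup_le ?_ (hnonneg a)
    rintro r ⟨l, x, hx, hx1, rfl⟩
    set y : A := star a * x with hy
    have hyJ : y ∈ J l := hmul_left l (star a) x hx
    by_cases hy0 : y = 0
    · rw [hy0]; simpa using hnonneg a
    · have hyn : (0 : ℝ) < ‖y‖ := norm_pos_iff.mpr hy0
      have h1 : ‖y‖ * ‖y‖ = ‖star y * y‖ := (CStarRing.norm_star_mul_self).symm
      have h2 : star y * y = star x * (a * y) := by
        rw [hy, star_mul, star_star, mul_assoc]
      have h3 : ‖star y * y‖ ≤ N a * ‖y‖ := by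
        rw [h2]
        calc ‖star x * (a * y)‖ ≤ ‖star x‖ * ‖a * y‖ := norm_mul_le _ _
          _ ≤ 1 * ‖a * y‖ := by
              apply mul_le_mul_of_nonneg_right _ (norm_nonneg _)
              rwa [norm_star]
          _ = ‖a * y‖ := one_mul _
          _ ≤ N a * ‖y‖ := hkey a l y hyJ
      have h4 : ‖y‖ * ‖y‖ ≤ N a * ‖y‖ := h1 ▸ h3
      exact le_of_mul_le_mul_right h4 hyn
  refine fun a b c => ⟨hle_norm a, ?_, ?_, ?_, ?_, ?_⟩
  -- subadditivity
  · refine Real.sSup_le ?_ (add_nonneg (hnonneg a) (hnonneg b))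
    rintro r ⟨l, x, hx, hx1, rfl⟩
    calc ‖(a + b) * x‖ = ‖a * x + b * x‖ := by rw [add_mul]
      _ ≤ ‖a * x‖ + ‖b * x‖ := norm_add_le _ _
      _ ≤ N a + N b := add_le_add (hmem_le a l x hx hx1) (hmem_le b l x hx hx1)
  -- homogeneity
  · by_cases hc : c = 0
    · have h0 : N ((0 : ℂ) • a) = 0 := by
        refine le_antisymm ?_ (by simpa using hnonneg ((0 : ℂ) • a))
        refine Real.sSup_le ?_ le_rfl
        rintro r ⟨l, x, hx, hx1, rfl⟩
        simp
      rw [hc, h0, norm_zero, zero_mul]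
    · refine le_antisymm (hsmul_le c a) ?_
      have h1 : N a ≤ ‖c⁻¹‖ * N (c • a) := by
        have := hsmul_le c⁻¹ (c • a)
        rwa [smul_smul, inv_mul_cancel₀ hc, one_smul] at this
      have h2 : ‖c‖ * N a ≤ ‖c‖ * (‖c⁻¹‖ * N (c • a)) :=
        mul_le_mul_of_nonneg_left h1 (norm_nonneg c)
      have hcc : ‖c‖ * ‖c⁻¹‖ = 1 := by
        rw [norm_inv, mul_inv_cancel₀ (norm_ne_zero_iff.mpr hc)]
      calc ‖c‖ * N a ≤ ‖c‖ * (‖c⁻¹‖ * N (c • a)) := h2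
        _ = (‖c‖ * ‖c⁻¹‖) * N (c • a) := by ring
        _ = N (c • a) := by rw [hcc, one_mul]
  -- submultiplicativity
  · refine Real.sSup_le ?_ (mul_nonneg (hnonneg a) (hnonneg b))
    rintro r ⟨l, x, hx, hx1, rfl⟩
    calc ‖a * b * x‖ = ‖a * (b * x)‖ := by rw [mul_assoc]
      _ ≤ N a * ‖b * x‖ := hkey a l (b * x) (hmul_left l b x hx)
      _ ≤ N a * N b := mul_le_mul_of_nonneg_left (hmem_le b l x hx hx1) (hnonneg a)
  -- star
  · exact le_antisymm (hstar_le a) (by simpa using hstar_le (star a))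
  -- C* identity
  · have hstar_eq : N (star a) = N a :=
      le_antisymm (hstar_le a) (by simpa using hstar_le (star a))
    refine le_antisymm ?_ ?_
    · -- ≤ from submultiplicativity
      have h1 : N (star a * a) ≤ N (star a) * N a := by
        refine Real.sSup_le ?_ (mul_nonneg (hnonneg (star a)) (hnonneg a))
        rintro r ⟨l, x, hx, hx1, rfl⟩
        calc ‖star a * a * x‖ = ‖star a * (a * x)‖ := by rw [mul_assoc]
          _ ≤ N (star a) * ‖a * x‖ := hkey (star a) l (a * x) (hmul_left l a x hx)
          _ ≤ N (star a) * N a :=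
              mul_le_mul_of_nonneg_left (hmem_le a l x hx hx1) (hnonneg (star a))
      rw [hstar_eq, ← sq] at h1
      exact h1
    · -- ≥
      have hsqrt : N a ≤ Real.sqrt (N (star a * a)) := by
        refine Real.sSup_le ?_ (Real.sqrt_nonneg _)
        rintro r ⟨l, x, hx, hx1, rfl⟩
        have h1 : ‖a * x‖ * ‖a * x‖ = ‖star (a * x) * (a * x)‖ :=
          (CStarRing.norm_star_mul_self).symm
        have h2 : star (a * x) * (a * x) = star x * (star a * a * x) := by
          simp only [star_mul, mul_assoc]
        have h3 : ‖a * x‖ * ‖a * x‖ ≤ N (star a * a) := by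
          rw [h1, h2]
          calc ‖star x * (star a * a * x)‖ ≤ ‖star x‖ * ‖star a * a * x‖ := norm_mul_le _ _
            _ ≤ 1 * ‖star a * a * x‖ := by
                apply mul_le_mul_of_nonneg_right _ (norm_nonneg _)
                rwa [norm_star]
            _ = ‖star a * a * x‖ := one_mul _
            _ ≤ N (star a * a) := hmem_le (star a * a) l x hx hx1
        have h4 : ‖a * x‖ ^ 2 ≤ N (star a * a) := by rwa [sq]
        exact (Real.le_sqrt (norm_nonneg _) (hnonneg _)).mpr h4
      calc N a ^ 2 ≤ Real.sqrt (N (star a * a)) ^ 2 :=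
            pow_le_pow_left₀ (hnonneg a) hsqrt 2
        _ = N (star a * a) := Real.sq_sqrt (hnonneg (star a * a))
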